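/- Let κ > 0, let k be a positive integer, and set Det(λ) = 2κ²λ^{−1/2}(1−cos√λ)(1+κ²/λ) − sin(√λ)(κ²/√λ+√λ)² for λ > 0. Then Det is differentiable at λ = (2kπ)² with derivative Det'((2kπ)²) = −(2kπ + κ²/(2kπ))²/(4kπ); in particular Det'((2kπ)²) ≠ 0, so the root (2kπ)² of Det is simple. -/

import Mathlib

/-- The determinant `Det(λ)` of the 2×2 linear system obtained by imposing the
non-local boundary conditions on `a·sin(√λ x) + b·cos(√λ x)`. -/
noncomputable def Det (κ l : ℝ) : ℝ :=
  2 * κ ^ 2 / Real.sqrt l * (1 - Real.cos (Real.sqrt l)) * (1 + κ ^ 2 / l)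
    - Real.sin (Real.sqrt l) * (κ ^ 2 / Real.sqrt l + Real.sqrt l) ^ 2

/-- **Simplicity of the even-mode roots.** For each positive integer `k`,
`Det` is differentiable at `λ = (2kπ)²` with
`Det'((2kπ)²) = -(2kπ + κ²/(2kπ))²/(4kπ) ≠ 0`, so the root `(2kπ)²` is
simple. -/
theorem det_deriv_at_even_roots (κ : ℝ) (hκ : 0 < κ) (k : ℕ) (hk : 0 < k) :
    HasDerivAt (Det κ)
      (-(2 * (k:ℝ) * Real.pi + κ ^ 2 / (2 * (k:ℝ) * Real.pi)) ^ 2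
        / (4 * (k:ℝ) * Real.pi))
      ((2 * (k:ℝ) * Real.pi) ^ 2) ∧
    (-(2 * (k:ℝ) * Real.pi + κ ^ 2 / (2 * (k:ℝ) * Real.pi)) ^ 2
        / (4 * (k:ℝ) * Real.pi)) ≠ 0 := by
  have hπ := Real.pi_pos
  have hk' : (0:ℝ) < k := by exact_mod_cast hk
  set s₀ : ℝ := 2 * (k:ℝ) * Real.pi with hs₀def
  have hs₀ : 0 < s₀ := by positivity
  have hcos : Real.cos s₀ = 1 := by
    have h : s₀ = (k:ℝ) * (2 * Real.pi) := by ring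
    rw [h, Real.cos_nat_mul_two_pi]
  have hsin : Real.sin s₀ = 0 := by
    have h : s₀ = ((2*k : ℕ):ℝ) * Real.pi := by push_cast; ring
    rw [h, Real.sin_nat_mul_pi]
  have hsqrt : Real.sqrt (s₀ ^ 2) = s₀ := Real.sqrt_sq hs₀.le
  -- derivative of F at s₀
  have hF : HasDerivAt (fun s : ℝ => 2 * κ ^ 2 / s * (1 - Real.cos s) * (1 + κ ^ 2 / s ^ 2)
      - Real.sin s * (κ ^ 2 / s + s) ^ 2) (-(κ ^ 2 / s₀ + s₀) ^ 2) s₀ := by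
    have h1 : HasDerivAt (fun s : ℝ => 2 * κ ^ 2 / s)
        ((0 * s₀ - 2 * κ ^ 2 * 1) / s₀ ^ 2) s₀ :=
      (hasDerivAt_const s₀ (2 * κ ^ 2)).div (hasDerivAt_id s₀) hs₀.ne'
    have h2 : HasDerivAt (fun s : ℝ => 1 - Real.cos s) (Real.sin s₀) s₀ := by
      exact ((hasDerivAt_const s₀ 1).sub (Real.hasDerivAt_cos s₀)).congr_deriv (by simp)
    have h3 : HasDerivAt (fun s : ℝ => 1 + κ ^ 2 / s ^ 2)
        (0 + (0 * s₀ ^ 2 - κ ^ 2 * (↑2 * s₀ ^ 1)) / (s₀ ^ 2) ^ 2) s₀ :=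
      (hasDerivAt_const s₀ 1).add
        (((hasDerivAt_const s₀ (κ ^ 2)).div (hasDerivAt_pow 2 s₀) (by positivity)))
    have h5 : HasDerivAt (fun s : ℝ => κ ^ 2 / s + s)
        ((0 * s₀ - κ ^ 2 * 1) / s₀ ^ 2 + 1) s₀ :=
      (((hasDerivAt_const s₀ (κ ^ 2)).div (hasDerivAt_id s₀) hs₀.ne')).add (hasDerivAt_id s₀)
    have h6 := ((Real.hasDerivAt_sin s₀).mul (h5.pow 2))
    have h7 := ((h1.mul h2).mul h3).sub h6
    refine h7.congr_deriv ?_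
    simp only [Pi.mul_apply, Pi.pow_apply]
    rw [hsin, hcos]
    field_simp
    ring
  rw [← hsqrt] at hF
  have hsq : HasDerivAt Real.sqrt (1 / (2 * Real.sqrt (s₀ ^ 2))) (s₀ ^ 2) :=
    Real.hasDerivAt_sqrt (by positivity)
  have hcomp := hF.comp (s₀ ^ 2) hsq
  have hev : Det κ =ᶠ[nhds (s₀ ^ 2)]
      ((fun s : ℝ => 2 * κ ^ 2 / s * (1 - Real.cos s) * (1 + κ ^ 2 / s ^ 2)
        - Real.sin s * (κ ^ 2 / s + s) ^ 2) ∘ Real.sqrt) := by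
    filter_upwards [eventually_gt_nhds (show (0:ℝ) < s₀ ^ 2 by positivity)] with l hl
    simp only [Det, Function.comp]
    rw [Real.sq_sqrt hl.le]
  constructor
  · have hD : HasDerivAt (Det κ)
        (-(κ ^ 2 / Real.sqrt (s₀ ^ 2) + Real.sqrt (s₀ ^ 2)) ^ 2
          * (1 / (2 * Real.sqrt (s₀ ^ 2)))) (s₀ ^ 2) :=
      hcomp.congr_of_eventuallyEq hev
    convert hD using 1
    rw [hsqrt]
    rw [hs₀def]
    field_simp
    ring
  · have hpos : 0 < 2 * (k:ℝ) * Real.pi + κ ^ 2 / (2 * (k:ℝ) * Real.pi) := by positivity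
    have h2 : -(2 * (k:ℝ) * Real.pi + κ ^ 2 / (2 * (k:ℝ) * Real.pi)) ^ 2 < 0 := by
      have := pow_pos hpos 2; linarith
    exact ne_of_lt (div_neg_of_neg_of_pos h2 (by positivity))
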